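/- If the inequality m^{1+κ} · ∏_{j=1}^{d-1} ⟨θ_j m⟩ ≥ c(κ) holds for all positive integers m (with c(κ) > 0), then the dyadic minimum μ(L) of the lattice Λ_θ satisfies μ(L) > c₁(κ) · 2^{|L|₁/(κ+1)} for all L ∈ ℤ_{≥0}^{d-1}, where c₁(κ) = (c(κ)·2^{d-1})^{1/(1+κ)} and |L|₁ = l₁ + ⋯ + l_{d-1}. -/

import Mathlib

open scoped BigOperators

/-- Distance from a real number to the nearest integer. -/
noncomputable def distInt (x : ℝ) : ℝ := |x - round x|

/-- The dyadic minimum `μ(L)` of the lattice `Λ_θ`: the infimum of `|m_d|` over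
nonzero `m_d ∈ ℤ` such that the lattice point `(θ₁ m_d - m₁, …, θ_n m_d - m_n, m_d)`
can be chosen (for suitable `m_j`) with `|θ_j m_d - m_j| ≤ 2^{-l_j-1}` for all `j`. -/
noncomputable def dyadicMin (n : ℕ) (θ : Fin n → ℝ) (L : Fin n → ℕ) : ℝ :=
  sInf {t : ℝ | ∃ md : ℤ, md ≠ 0 ∧
    (∀ j, distInt (θ j * md) ≤ (2 : ℝ) ^ (-(L j : ℝ) - 1)) ∧ t = |(md : ℝ)|}

/-- `round` is the nearest integer. -/
lemma distInt_le (x : ℝ) (k : ℤ) : distInt x ≤ |x - k| := by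
  rcases eq_or_ne k (round x) with rfl | hk
  · exact le_rfl
  · have hz : round x - k ≠ 0 := sub_ne_zero.2 (Ne.symm hk)
    have h1' : (1 : ℤ) ≤ |round x - k| := Int.one_le_abs hz
    have h1 : (1 : ℝ) ≤ |(round x : ℝ) - (k : ℝ)| := by exact_mod_cast h1'
    have h2 : |x - round x| ≤ 1 / 2 := abs_sub_round x
    have h3 : |(round x : ℝ) - k| ≤ |x - round x| + |x - k| := by
      calc |(round x : ℝ) - k| = |(x - k) - (x - round x)| := by ring_nf
        _ ≤ |x - k| + |x - round x| := abs_sub _ _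
        _ = |x - round x| + |x - k| := by ring
    unfold distInt
    linarith

lemma distInt_neg_le (x : ℝ) : distInt (-x) ≤ distInt x := by
  have h := distInt_le (-x) (-round x)
  have : |(-x) - ((-round x : ℤ) : ℝ)| = |x - round x| := by
    push_cast; rw [← abs_neg]; ring_nf
  rw [this] at h
  exact h

lemma distInt_neg (x : ℝ) : distInt (-x) = distInt x :=
  le_antisymm (distInt_neg_le x) (by simpa using distInt_neg_le (-x))

lemma distInt_pos_of_irrational {x : ℝ} (hx : Irrational x) : 0 < distInt x := by
  have : x - round x ≠ 0 := by
    have := hx.sub_intCast (round x)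
    intro h
    rw [h] at this
    exact not_irrational_zero this
  exact abs_pos.2 this

/-- Dirichlet-type: some nonzero multiple lands near the integers. -/
lemma exists_near {n : ℕ} (θ : Fin n → ℝ) {ε : ℝ} (hε : 0 < ε) :
    ∃ md : ℤ, md ≠ 0 ∧ ∀ j, distInt (θ j * md) < ε := by
  classical
  set u : ℕ → (Fin n → ℝ) := fun m j => Int.fract (θ j * m) with hu
  have hmem : ∀ m, u m ∈ Set.Icc (0 : Fin n → ℝ) 1 := by
    intro m
    constructor <;> intro j
    · exact Int.fract_nonneg _
    · exact (Int.fract_lt_one _).le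
  obtain ⟨x, -, φ, hφ, hconv⟩ := (isCompact_Icc (α := Fin n → ℝ)).tendsto_subseq hmem
  rw [Metric.tendsto_atTop] at hconv
  obtain ⟨N, hN⟩ := hconv (ε / 2) (by linarith)
  have h1 := hN N le_rfl
  have h2 := hN (N + 1) (by omega)
  refine ⟨(φ (N + 1) : ℤ) - φ N, ?_, ?_⟩
  · have : φ N < φ (N + 1) := hφ (by omega)
    omega
  · intro j
    have hd : dist (u (φ (N+1))) (u (φ N)) < ε := by
      calc dist (u (φ (N+1))) (u (φ N)) ≤ dist (u (φ (N+1))) x + dist x (u (φ N)) :=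
            dist_triangle _ _ _
        _ < ε / 2 + ε / 2 := by
            rw [dist_comm x]
            exact add_lt_add h2 h1
        _ = ε := by ring
    have hj : |u (φ (N+1)) j - u (φ N) j| < ε := by
      calc |u (φ (N+1)) j - u (φ N) j| = dist (u (φ (N+1)) j) (u (φ N) j) := by
            rw [Real.dist_eq]
        _ ≤ dist (u (φ (N+1))) (u (φ N)) := dist_le_pi_dist _ _ j
        _ < ε := hd
    have key : θ j * ((φ (N+1) : ℤ) - (φ N : ℤ) : ℤ)
        - ((⌊θ j * φ (N+1)⌋ - ⌊θ j * φ N⌋ : ℤ) : ℝ)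
        = u (φ (N+1)) j - u (φ N) j := by
      simp only [hu, Int.fract]
      push_cast
      ring
    calc distInt (θ j * ((φ (N+1) : ℤ) - (φ N : ℤ) : ℤ))
        ≤ |θ j * ((φ (N+1) : ℤ) - (φ N : ℤ) : ℤ)
            - ((⌊θ j * φ (N+1)⌋ - ⌊θ j * φ N⌋ : ℤ) : ℝ)| := distInt_le _ _
      _ = |u (φ (N+1)) j - u (φ N) j| := by rw [key]
      _ < ε := hj

theorem dyadicMin_lower_bound (n : ℕ) (hn : 1 ≤ n) (θ : Fin n → ℝ)
    (hθ : ∀ j, Irrational (θ j)) (κ c : ℝ) (hκ : 0 < κ) (hc : 0 < c)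
    (happrox : ∀ m : ℕ, 0 < m → c ≤ (m : ℝ) ^ (1 + κ) * ∏ j, distInt (θ j * m)) :
    ∀ L : Fin n → ℕ,
      (c * 2 ^ (n : ℝ)) ^ (1 / (1 + κ)) * 2 ^ ((∑ j, (L j : ℝ)) / (κ + 1))
        < dyadicMin n θ L := by
  have hne : Nonempty (Fin n) := ⟨⟨0, hn⟩⟩
  intro L
  set S : ℝ := ∑ j, (L j : ℝ) with hS
  have hκ1 : (0:ℝ) < 1 + κ := by linarith
  set B : ℝ := (c * 2 ^ (n : ℝ)) ^ (1 / (1 + κ)) * 2 ^ (S / (κ + 1)) with hB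
  have hS0 : 0 ≤ S := Finset.sum_nonneg fun j _ => Nat.cast_nonneg _
  -- every admissible md satisfies B < |md|
  have key : ∀ md : ℤ, md ≠ 0 →
      (∀ j, distInt (θ j * md) ≤ (2:ℝ) ^ (-(L j : ℝ) - 1)) → B < |(md:ℝ)| := by
    intro md hmd hle
    set m : ℕ := md.natAbs with hm
    have hm0 : 0 < m := Int.natAbs_pos.2 hmd
    have hmr : |(md:ℝ)| = (m:ℝ) := by
      rw [hm, Nat.cast_natAbs (α := ℝ), Int.cast_abs]
    -- distInt of θ j * m equals distInt of θ j * md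
    have hdm : ∀ j, distInt (θ j * m) = distInt (θ j * md) := by
      intro j
      have : (m : ℝ) = |(md:ℝ)| := hmr.symm
      rcases abs_choice ((md:ℝ)) with h | h
      · rw [this, h]
      · rw [this, h, mul_neg, distInt_neg]
    -- strict inequality for each j using irrationality
    have hstrict : ∀ j, distInt (θ j * m) < (2:ℝ) ^ (-(L j : ℝ) - 1) := by
      intro j
      have hirr : Irrational (θ j * md) := by
        rw [mul_comm]; exact (hθ j).intCast_mul hmd
      have hirr2 : Irrational (distInt (θ j * md)) := by
        have h3 : Irrational (θ j * md - round (θ j * md)) := hirr.sub_intCast _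
        unfold distInt
        rcases abs_choice (θ j * (md:ℝ) - round (θ j * (md:ℝ))) with h | h
        · rwa [h]
        · rw [h]; exact h3.neg
      have hval : (2:ℝ) ^ (-(L j : ℝ) - 1) = ((((2:ℚ) ^ (L j + 1))⁻¹ : ℚ) : ℝ) := by
        have he : -(L j : ℝ) - 1 = -((L j + 1 : ℕ) : ℝ) := by push_cast; ring
        rw [he, Real.rpow_neg (by norm_num), Real.rpow_natCast]
        push_cast
        ring
      have hne' : distInt (θ j * md) ≠ (2:ℝ) ^ (-(L j : ℝ) - 1) := by
        rw [hval]; exact hirr2.ne_rat _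
      rw [hdm j]
      exact lt_of_le_of_ne (hle j) hne'
    have hpos : ∀ j ∈ Finset.univ, 0 < distInt (θ j * m) := by
      intro j _
      rw [hdm j]
      exact distInt_pos_of_irrational (by rw [mul_comm]; exact (hθ j).intCast_mul hmd)
    have hprodlt : ∏ j, distInt (θ j * m) < ∏ j, (2:ℝ) ^ (-(L j : ℝ) - 1) :=
      Finset.prod_lt_prod_of_nonempty (fun j hj => hpos j hj)
        (fun j _ => hstrict j) Finset.univ_nonempty
    have hprodeq : ∏ j, (2:ℝ) ^ (-(L j : ℝ) - 1) = (2:ℝ) ^ (-S - n) := by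
      rw [← Real.rpow_sum_of_pos (by norm_num : (0:ℝ) < 2)]
      congr 1
      rw [Finset.sum_sub_distrib, Finset.sum_neg_distrib, Finset.sum_const,
        Finset.card_univ, Fintype.card_fin]
      simp [hS]
    have hmpow : (0:ℝ) < (m:ℝ) ^ (1 + κ) :=
      Real.rpow_pos_of_pos (by exact_mod_cast hm0) _
    have h1 : c < (m:ℝ) ^ (1 + κ) * (2:ℝ) ^ (-S - n) := by
      calc c ≤ (m:ℝ) ^ (1 + κ) * ∏ j, distInt (θ j * m) := happrox m hm0
        _ < (m:ℝ) ^ (1 + κ) * (2:ℝ) ^ (-S - n) := by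
            rw [← hprodeq]
            exact (mul_lt_mul_iff_right₀ hmpow).2 hprodlt
    have h2 : c * (2:ℝ) ^ (S + n) < (m:ℝ) ^ (1 + κ) := by
      have hrw : (2:ℝ) ^ (-S - n) = ((2:ℝ) ^ (S + (n:ℝ)))⁻¹ := by
        rw [← Real.rpow_neg (by norm_num)]
        ring_nf
      rw [hrw, ← div_eq_mul_inv] at h1
      have hq : (0:ℝ) < (2:ℝ) ^ (S + (n:ℝ)) := Real.rpow_pos_of_pos (by norm_num) _
      exact (lt_div_iff₀ hq).1 h1
    -- take rpow 1/(1+κ)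
    have hexp : 0 < 1 / (1 + κ) := by positivity
    have h3 : (c * (2:ℝ) ^ (S + n)) ^ (1 / (1 + κ)) < ((m:ℝ) ^ (1 + κ)) ^ (1 / (1 + κ)) :=
      Real.rpow_lt_rpow (by positivity) h2 hexp
    have h4 : ((m:ℝ) ^ (1 + κ)) ^ (1 / (1 + κ)) = (m:ℝ) := by
      rw [← Real.rpow_mul (Nat.cast_nonneg m), mul_one_div, div_self hκ1.ne',
        Real.rpow_one]
    have h5 : (c * (2:ℝ) ^ (S + n)) ^ (1 / (1 + κ)) = B := by
      rw [hB]
      rw [show (2:ℝ) ^ (S + (n:ℝ)) = (2:ℝ) ^ (n:ℝ) * (2:ℝ) ^ S by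
        rw [← Real.rpow_add (by norm_num)]; ring_nf]
      rw [show c * ((2:ℝ) ^ (n:ℝ) * (2:ℝ) ^ S) = (c * (2:ℝ) ^ (n:ℝ)) * (2:ℝ) ^ S by ring]
      rw [Real.mul_rpow (by positivity) (by positivity),
        ← Real.rpow_mul (by norm_num : (0:ℝ) ≤ 2), mul_one_div]
      rw [show S / (1 + κ) = S / (κ + 1) by ring]
    rw [hmr]
    calc B = (c * (2:ℝ) ^ (S + n)) ^ (1 / (1 + κ)) := h5.symm
      _ < ((m:ℝ) ^ (1 + κ)) ^ (1 / (1 + κ)) := h3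
      _ = (m:ℝ) := h4
  -- the admissible set is nonempty (Dirichlet)
  set T : Set ℝ := {t : ℝ | ∃ md : ℤ, md ≠ 0 ∧
    (∀ j, distInt (θ j * md) ≤ (2 : ℝ) ^ (-(L j : ℝ) - 1)) ∧ t = |(md : ℝ)|} with hT
  have hTne : T.Nonempty := by
    obtain ⟨md, hmd, hlt⟩ := exists_near θ (show (0:ℝ) < (2:ℝ) ^ (-S - 1) from
      Real.rpow_pos_of_pos (by norm_num) _)
    refine ⟨|(md:ℝ)|, md, hmd, fun j => ?_, rfl⟩
    refine (hlt j).le.trans ?_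
    apply Real.rpow_le_rpow_of_exponent_le (by norm_num)
    have : (L j : ℝ) ≤ S := Finset.single_le_sum (f := fun j => ((L j : ℕ) : ℝ))
      (fun i _ => Nat.cast_nonneg _) (Finset.mem_univ j)
    linarith
  have hlb : ∀ t ∈ T, ((⌊B⌋ : ℝ) + 1) ≤ t := by
    rintro t ⟨md, hmd, hle, rfl⟩
    have hBt : B < |(md:ℝ)| := key md hmd hle
    have habs : |(md:ℝ)| = ((|md| : ℤ) : ℝ) := by push_cast; rfl
    rw [habs] at hBt ⊢
    have : ⌊B⌋ < |md| := Int.floor_lt.2 hBt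
    have h6 : ⌊B⌋ + 1 ≤ |md| := this
    exact_mod_cast h6
  have : ((⌊B⌋ : ℝ) + 1) ≤ sInf T := le_csInf hTne hlb
  have hBf : B < (⌊B⌋ : ℝ) + 1 := Int.lt_floor_add_one B
  calc B < (⌊B⌋ : ℝ) + 1 := hBf
    _ ≤ sInf T := this
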